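/- Let f : ℝ^d → ℝ be a Borel function with essential infimum f* > -∞ and e^{-f} ∈ L¹(ℝ^d). For t > 0 let π_t be the probability measure with density proportional to e^{-f(x)/t}. Then for every ε > 0, π_t({x : f(x) ≥ f* + ε}) → 0 as t → 0. -/

import Mathlib

open MeasureTheory Topology Filter

/-- Convergence of Gibbs measures: π_t({f ≥ f* + ε}) → 0 as t → 0⁺, where
f* = essinf f = sInf {y | λ{f ≤ y} > 0}. -/
theorem stmt0 (d : ℕ) (f : EuclideanSpace ℝ (Fin d) → ℝ)
    (hf : Measurable f)
    (hne : {y : ℝ | 0 < volume {x | f x ≤ y}}.Nonempty)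
    (hbd : BddBelow {y : ℝ | 0 < volume {x | f x ≤ y}})
    (hint : Integrable (fun x => Real.exp (-f x)))
    (ε : ℝ) (hε : 0 < ε) :
    Tendsto (fun t : ℝ =>
        (∫ x in {x : EuclideanSpace ℝ (Fin d) |
            sInf {y : ℝ | 0 < volume {x' : EuclideanSpace ℝ (Fin d) | f x' ≤ y}} + ε ≤ f x},
          Real.exp (-f x / t)) / ∫ x, Real.exp (-f x / t))
      (𝓝[>] 0) (𝓝 0) := by
  set S : Set ℝ := {y : ℝ | 0 < volume {x' : EuclideanSpace ℝ (Fin d) | f x' ≤ y}} with hS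
  set F : ℝ := sInf S with hFdef
  set A : Set (EuclideanSpace ℝ (Fin d)) := {x | F + ε ≤ f x} with hA
  have hAmeas : MeasurableSet A := measurableSet_le measurable_const hf
  -- S is upward closed
  have hup : ∀ y z : ℝ, y ∈ S → y ≤ z → z ∈ S := by
    intro y z hy hyz
    exact lt_of_lt_of_le hy (measure_mono fun x hx => le_trans hx hyz)
  have hmem : ∀ y : ℝ, F < y → y ∈ S := by
    intro y hy
    obtain ⟨s, hs, hsy⟩ := exists_lt_of_csInf_lt hne hy
    exact hup s y hs hsy.le
  -- a.e. F ≤ f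
  have hnull : volume {x : EuclideanSpace ℝ (Fin d) | f x < F} = 0 := by
    have hsub : {x : EuclideanSpace ℝ (Fin d) | f x < F} ⊆
        ⋃ n : ℕ, {x | f x ≤ F - 1 / (n + 1)} := by
      intro x hx
      obtain ⟨n, hn⟩ := exists_nat_one_div_lt (show (0:ℝ) < F - f x from sub_pos.mpr hx)
      exact Set.mem_iUnion.mpr ⟨n, by simp only [Set.mem_setOf_eq]; linarith⟩
    refine measure_mono_null hsub (measure_iUnion_null fun n => ?_)
    by_contra h
    have hpos : (F - 1 / (n + 1) : ℝ) ∈ S := pos_iff_ne_zero.mpr h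
    have : F ≤ F - 1 / (n + 1) := csInf_le hbd hpos
    have hn1 : (0 : ℝ) < 1 / (n + 1) := by positivity
    linarith
  have hae : ∀ᵐ x, F ≤ f x := by
    rw [ae_iff]
    simpa only [not_le] using hnull
  -- B has positive finite measure
  set B : Set (EuclideanSpace ℝ (Fin d)) := {x | f x ≤ F + ε / 2} with hB
  have hBmeas : MeasurableSet B := measurableSet_le hf measurable_const
  have hBpos : 0 < volume B := hmem (F + ε / 2) (by linarith)
  have hBfin : volume B < ⊤ := by
    have := hint.measure_ge_lt_top (Real.exp_pos (-(F + ε / 2)))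
    convert this using 2
    ext x
    simp only [Set.mem_setOf_eq, Real.exp_le_exp, neg_le_neg_iff]
    exact Iff.rfl
  set m : ℝ := (volume B).toReal with hm
  have hmpos : 0 < m := ENNReal.toReal_pos hBpos.ne' hBfin.ne
  set I : ℝ := ∫ x, Real.exp (-f x) with hI
  have hInn : 0 ≤ I := integral_nonneg fun x => (Real.exp_pos _).le
  -- the dominating function
  set G : ℝ → ℝ := fun t => I / m * Real.exp (F + ε) * Real.exp (-(ε / 2 / t)) with hG
  have hGlim : Tendsto G (𝓝[>] (0 : ℝ)) (𝓝 0) := by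
    have h1 : Tendsto (fun t : ℝ => ε / 2 / t) (𝓝[>] (0 : ℝ)) atTop := by
      have := Tendsto.const_mul_atTop (half_pos hε) tendsto_inv_nhdsGT_zero
      simpa [div_eq_mul_inv] using this
    have h2 : Tendsto (fun t : ℝ => Real.exp (-(ε / 2 / t))) (𝓝[>] (0 : ℝ)) (𝓝 0) :=
      Real.tendsto_exp_neg_atTop_nhds_zero.comp h1
    have := h2.const_mul (I / m * Real.exp (F + ε))
    simpa using this
  refine squeeze_zero' ?_ ?_ hGlim
  · filter_upwards [self_mem_nhdsWithin] with t ht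
    refine div_nonneg ?_ ?_
    · exact setIntegral_nonneg hAmeas fun x _ => (Real.exp_pos _).le
    · exact integral_nonneg fun x => (Real.exp_pos _).le
  · filter_upwards [Ioo_mem_nhdsGT one_pos] with t ht
    obtain ⟨ht0, ht1⟩ := ht
    have hcoef : 0 ≤ 1 / t - 1 := by
      rw [sub_nonneg, le_div_iff₀ ht0]; linarith
    -- global integrability of exp(-f/t)
    have hptle : ∀ᵐ x, ‖Real.exp (-f x / t)‖ ≤ Real.exp (-F * (1 / t - 1)) * Real.exp (-f x) := by
      filter_upwards [hae] with x hx
      rw [Real.norm_eq_abs, abs_of_pos (Real.exp_pos _), ← Real.exp_add]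
      apply Real.exp_le_exp.mpr
      rw [div_le_iff₀ ht0]
      have h1t : -F * (1 / t - 1) * t = -F * (1 - t) := by field_simp
      nlinarith [mul_le_mul_of_nonneg_left hx (sub_nonneg.mpr ht1.le)]
    have hInt_t : Integrable (fun x => Real.exp (-f x / t)) := by
      refine Integrable.mono' (hint.const_mul (Real.exp (-F * (1 / t - 1)))) ?_ hptle
      exact (Real.measurable_exp.comp ((hf.neg).div_const t)).aestronglyMeasurable
    -- numerator bound
    have hnum : (∫ x in A, Real.exp (-f x / t)) ≤
        Real.exp (-(F + ε) * (1 / t - 1)) * I := by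
      have step1 : (∫ x in A, Real.exp (-f x / t)) ≤
          ∫ x in A, Real.exp (-(F + ε) * (1 / t - 1)) * Real.exp (-f x) := by
        refine setIntegral_mono_on hInt_t.integrableOn
          ((hint.const_mul _).integrableOn) hAmeas ?_
        intro x hx
        rw [← Real.exp_add]
        apply Real.exp_le_exp.mpr
        rw [div_le_iff₀ ht0]
        have hx' : F + ε ≤ f x := hx
        have h1t : -(F + ε) * (1 / t - 1) * t = -(F + ε) * (1 - t) := by field_simp
        nlinarith [mul_le_mul_of_nonneg_left hx' (sub_nonneg.mpr ht1.le)]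
      have step2 : (∫ x in A, Real.exp (-(F + ε) * (1 / t - 1)) * Real.exp (-f x)) ≤
          ∫ x, Real.exp (-(F + ε) * (1 / t - 1)) * Real.exp (-f x) := by
        refine setIntegral_le_integral (hint.const_mul _) ?_
        exact Eventually.of_forall fun x => by positivity
      calc (∫ x in A, Real.exp (-f x / t)) ≤ _ := step1
        _ ≤ _ := step2
        _ = Real.exp (-(F + ε) * (1 / t - 1)) * I := integral_const_mul _ _
    -- denominator bound
    have hden : m * Real.exp (-(F + ε / 2) / t) ≤ ∫ x, Real.exp (-f x / t) := by
      have step1 : m * Real.exp (-(F + ε / 2) / t) = ∫ _ in B, Real.exp (-(F + ε / 2) / t) := by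
        rw [setIntegral_const, smul_eq_mul, measureReal_def]
      have step2 : (∫ _ in B, Real.exp (-(F + ε / 2) / t)) ≤ ∫ x in B, Real.exp (-f x / t) := by
        refine setIntegral_mono_on (integrableOn_const hBfin.ne)
          hInt_t.integrableOn hBmeas ?_
        intro x hx
        apply Real.exp_le_exp.mpr
        rw [div_le_div_iff_of_pos_right ht0]
        have : f x ≤ F + ε / 2 := hx
        linarith
      have step3 : (∫ x in B, Real.exp (-f x / t)) ≤ ∫ x, Real.exp (-f x / t) :=
        setIntegral_le_integral hInt_t (Eventually.of_forall fun x => (Real.exp_pos _).le)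
      rw [step1]; exact le_trans step2 step3
    have hdenpos : 0 < m * Real.exp (-(F + ε / 2) / t) := by positivity
    have hbound : (∫ x in A, Real.exp (-f x / t)) / (∫ x, Real.exp (-f x / t)) ≤
        Real.exp (-(F + ε) * (1 / t - 1)) * I / (m * Real.exp (-(F + ε / 2) / t)) :=
      div_le_div₀ (by positivity) hnum hdenpos hden
    refine le_trans hbound (le_of_eq ?_)
    have hexp : Real.exp (-(F + ε) * (1 / t - 1)) =
        Real.exp (F + ε) * Real.exp (-(ε / 2 / t)) * Real.exp (-(F + ε / 2) / t) := by
      rw [← Real.exp_add, ← Real.exp_add]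
      congr 1
      field_simp
      ring
    rw [hexp, hG]
    field_simp
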